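/- For distinct primes p < q, the identity (p − 1)(q − 1) = (p_q* − 1)·p + (q_p* − 1)·q holds. -/

import Mathlib

/-- For distinct primes `p < q`, with `pq = p_q*` and `qp = q_p*` the inverses of
`p` mod `q` and of `q` mod `p`, one has `(p−1)(q−1) = (p_q* − 1) p + (q_p* − 1) q`. -/
theorem totient_identity (p q pqs qps : ℕ) (hp : p.Prime) (hq : q.Prime) (hpq : p < q)
    (hpqs1 : 0 < pqs) (hpqs2 : pqs < q) (hpqs3 : p * pqs ≡ 1 [MOD q])
    (hqps1 : 0 < qps) (hqps2 : qps < p) (hqps3 : q * qps ≡ 1 [MOD p]) :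
    (p - 1) * (q - 1) = (pqs - 1) * p + (qps - 1) * q := by
  have hp2 := hp.two_le
  have hq2 := hq.two_le
  set S := p * pqs + q * qps with hS
  -- S ≡ 1 mod q
  have h1 : S ≡ 1 [MOD q] := by
    have hz : q * qps ≡ 0 [MOD q] := (Nat.modEq_zero_iff_dvd).2 ⟨qps, rfl⟩
    have h := hpqs3.add hz
    rw [Nat.add_zero] at h
    exact h
  -- S ≡ 1 mod p
  have h2 : S ≡ 1 [MOD p] := by
    have hz : p * pqs ≡ 0 [MOD p] := (Nat.modEq_zero_iff_dvd).2 ⟨pqs, rfl⟩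
    have h := hz.add hqps3
    rw [Nat.zero_add] at h
    exact h
  have hcop : Nat.Coprime p q := (Nat.coprime_primes hp hq).2 (Nat.ne_of_lt hpq)
  have h3 : S ≡ 1 [MOD p * q] := (Nat.modEq_and_modEq_iff_modEq_mul hcop).1 ⟨h2, h1⟩
  have hpq1 : 1 < p * q := by nlinarith
  have hmod : S % (p * q) = 1 := by
    have h4 := h3
    rwa [Nat.ModEq, Nat.mod_eq_of_lt hpq1] at h4
  have hdiv : S = p * q * (S / (p * q)) + 1 := by
    conv_lhs => rw [← Nat.div_add_mod S (p * q)]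
    rw [hmod]
  -- bounds on S
  have hub : S ≤ 2 * (p * q) - p - q := by
    have b1 : p * pqs ≤ p * (q - 1) := Nat.mul_le_mul_left p (by omega)
    have b2 : q * qps ≤ q * (p - 1) := Nat.mul_le_mul_left q (by omega)
    have e1 : p * (q - 1) = p * q - p := by rw [Nat.mul_sub_one]
    have e2 : q * (p - 1) = p * q - q := by rw [Nat.mul_sub_one, Nat.mul_comm]
    have hpltpq : p ≤ p * q := Nat.le_mul_of_pos_right p (by omega)
    have hqltpq : q ≤ p * q := Nat.le_mul_of_pos_left q (by omega)
    omega
  have hlb : p + q ≤ S := by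
    have b1 : p ≤ p * pqs := Nat.le_mul_of_pos_right p hpqs1
    have b2 : q ≤ q * qps := Nat.le_mul_of_pos_right q hqps1
    omega
  -- deduce S / (p*q) = 1
  set d := S / (p * q) with hd
  have hd1 : d = 1 := by
    rcases Nat.lt_or_ge d 1 with h | h
    · interval_cases d <;> omega
    · rcases Nat.lt_or_ge d 2 with h' | h'
      · omega
      · exfalso
        have : 2 * (p * q) ≤ p * q * d := by nlinarith
        omega
  have key : (p:ℤ) * pqs + q * qps = p * q + 1 := by
    have : S = p * q + 1 := by rw [hdiv, hd1]; ring
    exact_mod_cast congrArg (Nat.cast : ℕ → ℤ) this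
  zify [show 1 ≤ p by omega, show 1 ≤ q by omega, show 1 ≤ pqs by omega, show 1 ≤ qps by omega]
  linear_combination -key
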